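/- Let (a, b, c) be a primitive Pythagorean triple with a odd and b even. Then Δ = c − b is an odd perfect square, Δ divides a², and gcd(Δ, a²/Δ) = 1. -/

import Mathlib

theorem stmt_6 (a b c : ℕ) (ha : 0 < a) (hb : 0 < b) (hc : 0 < c)
    (h : a ^ 2 + b ^ 2 = c ^ 2)
    (hprim : Nat.gcd a (Nat.gcd b c) = 1)
    (haodd : Odd a) (hbeven : Even b) :
    Odd (c - b) ∧ (∃ n : ℕ, c - b = n ^ 2) ∧ (c - b) ∣ a ^ 2 ∧
      Nat.gcd (c - b) (a ^ 2 / (c - b)) = 1 := by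
  have hbc : b < c := by nlinarith
  have key : a ^ 2 = (c - b) * (c + b) := by
    have h1 : c ^ 2 - b ^ 2 = (c + b) * (c - b) := Nat.sq_sub_sq c b
    rw [mul_comm] at h1
    omega
  have hcodd : Odd c := by
    have h1 : Odd (a ^ 2) := haodd.pow
    have h2 : Even (b ^ 2) := Nat.even_pow.mpr ⟨hbeven, two_ne_zero⟩
    have h3 : Odd (c ^ 2) := by rw [← h]; exact h1.add_even h2
    rcases Nat.even_or_odd c with hce | hco
    · exact absurd h3 (Nat.not_odd_iff_even.mpr (Nat.even_pow.mpr ⟨hce, two_ne_zero⟩))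
    · exact hco
  have hdodd : Odd (c - b) := by
    rcases hbeven with ⟨k, hk⟩
    rcases hcodd with ⟨m, hm⟩
    exact ⟨m - k, by omega⟩
  have hbcgcd : Nat.gcd b c = 1 := by
    set g := Nat.gcd b c with hg
    have h1 : g ^ 2 ∣ b ^ 2 := pow_dvd_pow_of_dvd (Nat.gcd_dvd_left b c) 2
    have h2 : g ^ 2 ∣ c ^ 2 := pow_dvd_pow_of_dvd (Nat.gcd_dvd_right b c) 2
    have hg2 : g ^ 2 ∣ a ^ 2 := by
      have := Nat.dvd_sub h2 h1
      rwa [show c ^ 2 - b ^ 2 = a ^ 2 by omega] at this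
    have hga : g ∣ a := (Nat.pow_dvd_pow_iff two_ne_zero).mp hg2
    have : g ∣ Nat.gcd a (Nat.gcd b c) := Nat.dvd_gcd hga dvd_rfl
    rw [hprim] at this
    exact Nat.eq_one_of_dvd_one this
  have hcop : Nat.gcd (c - b) (c + b) = 1 := by
    set g := Nat.gcd (c - b) (c + b) with hg
    have hgodd : Odd g := hdodd.of_dvd_nat (Nat.gcd_dvd_left _ _)
    have h2c : g ∣ 2 * c := by
      have := Nat.dvd_add (Nat.gcd_dvd_left (c - b) (c + b))
        (Nat.gcd_dvd_right (c - b) (c + b))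
      rwa [show c - b + (c + b) = 2 * c by omega] at this
    have h2b : g ∣ 2 * b := by
      have := Nat.dvd_sub (Nat.gcd_dvd_right (c - b) (c + b))
        (Nat.gcd_dvd_left (c - b) (c + b))
      rwa [show c + b - (c - b) = 2 * b by omega] at this
    have hg2 : Nat.Coprime g 2 := by
      rcases Nat.coprime_or_dvd_of_prime Nat.prime_two g with hco | hdv
      · exact hco.symm
      · rcases hgodd with ⟨m, hm⟩; omega
    have hgc : g ∣ c := (Nat.Coprime.dvd_of_dvd_mul_left hg2 h2c)
    have hgb : g ∣ b := (Nat.Coprime.dvd_of_dvd_mul_left hg2 h2b)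
    have : g ∣ Nat.gcd b c := Nat.dvd_gcd hgb hgc
    rw [hbcgcd] at this
    exact Nat.eq_one_of_dvd_one this
  have hdvd : (c - b) ∣ a ^ 2 := ⟨c + b, key⟩
  have hdiv : a ^ 2 / (c - b) = c + b := by
    rw [key, Nat.mul_div_cancel_left _ (by omega)]
  refine ⟨hdodd, ?_, hdvd, by rw [hdiv]; exact hcop⟩
  exact exists_eq_pow_of_mul_eq_pow (by rw [Nat.isUnit_iff]; exact hcop) key.symm
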